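/- Let α > 2 and θ > 0, and let F be a nonnegative random variable on a probability space with E[F^{2/α}] < ∞. Then ∫₀^∞ (1 − E[ exp(−θ F r^{−α}) ]) · 2πr dr = π Γ(1 − 2/α) · E[F^{2/α}] · θ^{2/α}, where Γ denotes the real Gamma function. -/

import Mathlib

open MeasureTheory Real Set Filter

lemma one_sub_exp_neg_le (x : ℝ) : 1 - Real.exp (-x) ≤ x := by
  nlinarith [Real.add_one_le_exp (-x)]

lemma one_sub_exp_neg_nonneg {x : ℝ} (hx : 0 ≤ x) : 0 ≤ 1 - Real.exp (-x) := by
  have := Real.exp_le_exp.mpr (neg_nonpos.mpr hx)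
  simpa [Real.exp_zero] using this

lemma exp_neg_le_inv {x : ℝ} (hx : 0 < x) : Real.exp (-x) ≤ x⁻¹ := by
  rw [Real.exp_neg]
  have h1 : x ≤ Real.exp x := by nlinarith [Real.add_one_le_exp x]
  exact inv_anti₀ hx h1

lemma hA_int {α : ℝ} (hα : 2 < α) {c : ℝ} (hc : 0 ≤ c) :
    IntegrableOn (fun r : ℝ => (1 - Real.exp (-(c * r ^ (-α)))) * (2 * r)) (Ioi 0) := by
  have hmeas : Measurable (fun r : ℝ => (1 - Real.exp (-(c * r ^ (-α)))) * (2 * r)) := by fun_prop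
  rw [show Ioi (0:ℝ) = Ioc 0 1 ∪ Ioi 1 from (Ioc_union_Ioi_eq_Ioi zero_le_one).symm]
  apply IntegrableOn.union
  · apply Integrable.mono' (integrable_const 2) hmeas.aestronglyMeasurable.restrict
    filter_upwards [ae_restrict_mem measurableSet_Ioc] with r hr
    have h1 : 0 ≤ c * r ^ (-α) := mul_nonneg hc (Real.rpow_nonneg hr.1.le _)
    have h2 := one_sub_exp_neg_nonneg h1
    have h3 := Real.exp_pos (-(c * r ^ (-α)))
    rw [Real.norm_eq_abs, abs_of_nonneg (by nlinarith [hr.1.le])]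
    have := mul_le_mul (show 1 - Real.exp (-(c * r ^ (-α))) ≤ 1 by linarith)
      (show 2*r ≤ 2 by linarith [hr.2]) (by linarith [hr.1.le]) one_pos.le
    linarith
  · apply Integrable.mono' (((integrableOn_Ioi_rpow_of_lt (show 1-α < -1 by linarith)
      zero_lt_one).const_mul (2*c))) hmeas.aestronglyMeasurable.restrict
    filter_upwards [ae_restrict_mem measurableSet_Ioi] with r hr
    have hr0 : (0:ℝ) < r := lt_trans zero_lt_one hr
    have h1 : 0 ≤ c * r ^ (-α) := mul_nonneg hc (Real.rpow_nonneg hr0.le _)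
    have h2 := one_sub_exp_neg_nonneg h1
    have h4 : r ^ (1-α) = r ^ (-α) * r := by
      rw [show (1-α) = -α + 1 by ring, Real.rpow_add hr0, Real.rpow_one]
    rw [Real.norm_eq_abs, abs_of_nonneg (by nlinarith)]
    have h5 := mul_le_mul_of_nonneg_right (one_sub_exp_neg_le (c * r ^ (-α)))
      (show (0:ℝ) ≤ 2*r by linarith)
    calc (1 - Real.exp (-(c * r ^ (-α)))) * (2 * r) ≤ c * r ^ (-α) * (2 * r) := h5
      _ = 2 * c * r ^ (1-α) := by rw [h4]; ring

lemma hB_int {α : ℝ} (hα : 2 < α) {c : ℝ} (hc : 0 < c) :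
    IntegrableOn (fun r : ℝ => c * α * (r ^ (1-α) * Real.exp (-(c * r ^ (-α))))) (Ioi 0) := by
  have hα0 : (0:ℝ) < α := by linarith
  have hmeas : Measurable (fun r : ℝ => c * α * (r ^ (1-α) * Real.exp (-(c * r ^ (-α))))) := by
    fun_prop
  rw [show Ioi (0:ℝ) = Ioc 0 1 ∪ Ioi 1 from (Ioc_union_Ioi_eq_Ioi zero_le_one).symm]
  apply IntegrableOn.union
  · apply Integrable.mono' (integrable_const α) hmeas.aestronglyMeasurable.restrict
    filter_upwards [ae_restrict_mem measurableSet_Ioc] with r hr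
    have hr0 : (0:ℝ) < r := hr.1
    have h1 : 0 < c * r ^ (-α) := mul_pos hc (Real.rpow_pos_of_pos hr0 _)
    have h3 := exp_neg_le_inv h1
    have h5 : (c * r ^ (-α))⁻¹ = c⁻¹ * r ^ α := by
      rw [mul_inv, ← Real.rpow_neg hr0.le, neg_neg]
    have h6 : r ^ (1-α) * r ^ α = r := by
      rw [← Real.rpow_add hr0]; norm_num
    have hnn : 0 ≤ r ^ (1-α) := Real.rpow_nonneg hr0.le _
    have hx : r ^ (1-α) * Real.exp (-(c * r ^ (-α))) ≤ r ^ (1-α) * ((c * r ^ (-α))⁻¹) :=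
      mul_le_mul_of_nonneg_left h3 hnn
    rw [h5] at hx
    have h7 : c * α * (r ^ (1-α) * Real.exp (-(c * r ^ (-α)))) ≤ α * r := by
      calc c * α * (r ^ (1-α) * Real.exp (-(c * r ^ (-α))))
          ≤ c * α * (r ^ (1-α) * (c⁻¹ * r ^ α)) :=
            mul_le_mul_of_nonneg_left hx (by positivity)
        _ = α * (r ^ (1-α) * r ^ α) * (c * c⁻¹) := by ring
        _ = α * r := by rw [h6, mul_inv_cancel₀ hc.ne', mul_one]
    rw [Real.norm_eq_abs, abs_of_nonneg (by positivity)]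
    nlinarith [hr.2]
  · apply Integrable.mono' (((integrableOn_Ioi_rpow_of_lt (show 1-α < -1 by linarith)
      zero_lt_one).const_mul (c*α))) hmeas.aestronglyMeasurable.restrict
    filter_upwards [ae_restrict_mem measurableSet_Ioi] with r hr
    have hr0 : (0:ℝ) < r := lt_trans zero_lt_one hr
    have h3 : Real.exp (-(c * r ^ (-α))) ≤ 1 := by
      have h1 : 0 ≤ c * r ^ (-α) := mul_nonneg hc.le (Real.rpow_nonneg hr0.le _)
      simpa [Real.exp_zero] using Real.exp_le_exp.mpr (neg_nonpos.mpr h1)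
    rw [Real.norm_eq_abs, abs_of_nonneg (by positivity)]
    have hnn : 0 ≤ r ^ (1-α) := Real.rpow_nonneg hr0.le _
    have hx : r ^ (1-α) * Real.exp (-(c * r ^ (-α))) ≤ r ^ (1-α) * 1 :=
      mul_le_mul_of_nonneg_left h3 hnn
    calc c * α * (r ^ (1-α) * Real.exp (-(c * r ^ (-α))))
        ≤ c * α * (r ^ (1-α) * 1) := mul_le_mul_of_nonneg_left hx (by positivity)
      _ = c * α * r ^ (1-α) := by ring

lemma hasDerivF {α c : ℝ} {r : ℝ} (hr : 0 < r) :
    HasDerivAt (fun t : ℝ => t ^ 2 * (1 - Real.exp (-(c * t ^ (-α)))))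
      ((1 - Real.exp (-(c * r ^ (-α)))) * (2 * r)
        - c * α * (r ^ (1-α) * Real.exp (-(c * r ^ (-α))))) r := by
  have h1 : HasDerivAt (fun t : ℝ => t ^ (-α)) (-α * r ^ (-α - 1)) r :=
    Real.hasDerivAt_rpow_const (Or.inl hr.ne')
  have h2 : HasDerivAt (fun t : ℝ => -(c * t ^ (-α))) (-(c * (-α * r ^ (-α-1)))) r :=
    (h1.const_mul c).neg
  have h3 : HasDerivAt (fun t : ℝ => Real.exp (-(c * t ^ (-α))))
      (Real.exp (-(c * r ^ (-α))) * -(c * (-α * r ^ (-α-1)))) r := (Real.hasDerivAt_exp _).comp r h2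
  have h4 := h3.const_sub 1
  have h5 := (hasDerivAt_pow 2 r).mul h4
  refine h5.congr_deriv ?_
  have h6 : r ^ (1-α) = r ^ (-α-1) * r ^ 2 := by
    rw [← Real.rpow_natCast r 2, ← Real.rpow_add hr]
    ring_nf
  rw [h6]
  push_cast
  ring
open MeasureTheory Real Set Filter

lemma core_pos {α : ℝ} (hα : 2 < α) {c : ℝ} (hc : 0 < c) :
    ∫ r in Ioi (0:ℝ), (1 - Real.exp (-(c * r ^ (-α)))) * (2 * r)
      = Real.Gamma (1 - 2/α) * c ^ (2/α) := by
  have hα0 : (0:ℝ) < α := by linarith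
  have hs0 : 0 < 2/α := by positivity
  have hs1 : 2/α < 1 := by rw [div_lt_one hα0]; linarith
  have hA := hA_int hα hc.le
  have hB := hB_int hα hc
  -- FTC
  have hcont : ContinuousWithinAt (fun t : ℝ => t ^ 2 * (1 - Real.exp (-(c * t ^ (-α)))))
      (Ici 0) 0 := by
    rw [ContinuousWithinAt]
    norm_num
    apply squeeze_zero' (g := fun t : ℝ => t ^ 2)
    · filter_upwards [eventually_mem_nhdsWithin] with t (ht : t ∈ Ici (0:ℝ))
      have h1 : 0 ≤ c * t ^ (-α) := mul_nonneg hc.le (Real.rpow_nonneg ht _)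
      nlinarith [one_sub_exp_neg_nonneg h1, sq_nonneg t]
    · filter_upwards [eventually_mem_nhdsWithin] with t (ht : t ∈ Ici (0:ℝ))
      have h1 : 0 ≤ c * t ^ (-α) := mul_nonneg hc.le (Real.rpow_nonneg ht _)
      nlinarith [one_sub_exp_neg_nonneg h1, one_sub_exp_neg_le (c * t ^ (-α)),
        Real.exp_pos (-(c * t ^ (-α))), sq_nonneg t]
    · have : Tendsto (fun t : ℝ => t ^ 2) (nhds 0) (nhds 0) := by
        simpa using (continuous_pow 2).tendsto (0:ℝ)
      exact this.mono_left nhdsWithin_le_nhds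
  have htop : Tendsto (fun t : ℝ => t ^ 2 * (1 - Real.exp (-(c * t ^ (-α))))) atTop (nhds 0) := by
    apply squeeze_zero' (g := fun t : ℝ => c * t ^ (2 - α))
    · filter_upwards [eventually_gt_atTop (0:ℝ)] with t ht
      have h1 : 0 ≤ c * t ^ (-α) := mul_nonneg hc.le (Real.rpow_nonneg ht.le _)
      nlinarith [one_sub_exp_neg_nonneg h1, sq_nonneg t]
    · filter_upwards [eventually_gt_atTop (0:ℝ)] with t ht
      have h6 : t ^ (2-α) = t ^ (-α) * t ^ 2 := by
        rw [← Real.rpow_natCast t 2, ← Real.rpow_add ht]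
        ring_nf
      have h5 := mul_le_mul_of_nonneg_left (one_sub_exp_neg_le (c * t ^ (-α)))
        (sq_nonneg t)
      calc t ^ 2 * (1 - Real.exp (-(c * t ^ (-α)))) ≤ t ^ 2 * (c * t ^ (-α)) := h5
        _ = c * t ^ (2-α) := by rw [h6]; ring
    · have h := tendsto_rpow_neg_atTop (show (0:ℝ) < α - 2 by linarith)
      have h2 : Tendsto (fun t : ℝ => c * t ^ (2-α)) atTop (nhds (c * 0)) := by
        apply Tendsto.const_mul
        convert h using 2 with t
        ring_nf
      simpa using h2
  have hftc := integral_Ioi_of_hasDerivAt_of_tendsto hcont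
    (fun x hx => hasDerivF (α := α) (c := c) hx) (hA.sub hB) htop
  norm_num at hftc
  have hAB : ∫ r in Ioi (0:ℝ), (1 - Real.exp (-(c * r ^ (-α)))) * (2 * r)
      = ∫ r in Ioi (0:ℝ), c * α * (r ^ (1-α) * Real.exp (-(c * r ^ (-α)))) := by
    have := integral_sub hA hB
    rw [hftc] at this
    linarith [this]
  rw [hAB]
  -- substitution
  have hsub := integral_comp_rpow_Ioi (fun y => c * (y ^ ((1 - 2/α) - 1) * Real.exp (-(c * y))))
    (p := -α) (by linarith : (-α:ℝ) ≠ 0)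
  have heq : ∫ r in Ioi (0:ℝ), c * α * (r ^ (1-α) * Real.exp (-(c * r ^ (-α))))
      = ∫ x in Ioi (0:ℝ),
          (|(-α)| * x ^ (-α - 1)) • (c * ((x ^ (-α)) ^ ((1 - 2/α) - 1) * Real.exp (-(c * x ^ (-α))))) := by
    apply setIntegral_congr_fun measurableSet_Ioi
    intro x hx
    have hx0 : (0:ℝ) < x := hx
    have h1 : (x ^ (-α)) ^ ((1 - 2/α) - 1) = x ^ (2:ℕ) := by
      rw [← Real.rpow_mul hx0.le, show (-α * ((1 - 2/α) - 1)) = 2 by field_simp; ring,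
        ← Real.rpow_natCast x 2]
      norm_num
    have h2 : x ^ (-α - 1) * x ^ (2:ℕ) = x ^ (1 - α) := by
      rw [← Real.rpow_natCast x 2, ← Real.rpow_add hx0]
      ring_nf
    simp only [smul_eq_mul, abs_neg, abs_of_pos hα0, h1]
    rw [← h2]
    ring
  rw [heq, hsub, integral_const_mul, integral_rpow_mul_exp_neg_mul_Ioi (by linarith) hc]
  rw [one_div, Real.inv_rpow hc.le, ← Real.rpow_neg hc.le]
  nth_rewrite 1 [← Real.rpow_one c]
  rw [← mul_assoc, ← Real.rpow_add hc, show (1:ℝ) + -(1 - 2/α) = 2/α by ring]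
  ring
open MeasureTheory Real Set Filter

lemma core {α : ℝ} (hα : 2 < α) {c : ℝ} (hc : 0 ≤ c) :
    ∫ r in Ioi (0:ℝ), (1 - Real.exp (-(c * r ^ (-α)))) * (2 * r)
      = Real.Gamma (1 - 2/α) * c ^ (2/α) := by
  have hα0 : (0:ℝ) < α := by linarith
  rcases hc.eq_or_lt with h | h
  · rw [← h]
    simp [Real.zero_rpow (show 2/α ≠ 0 by positivity)]
  · exact core_pos hα h

/-- For `α > 2`, `θ > 0` and a nonnegative random variable `F` with `E[F^{2/α}] < ∞`:
`∫₀^∞ (1 − E[exp(−θ F r^{−α})]) · 2πr dr = π Γ(1 − 2/α) E[F^{2/α}] θ^{2/α}`. -/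
theorem integral_one_sub_laplace_fading (α θ : ℝ) (hα : 2 < α) (hθ : 0 < θ)
    {Ω : Type*} [MeasurableSpace Ω] (P : Measure Ω) [IsProbabilityMeasure P]
    (F : Ω → ℝ) (hFmeas : Measurable F) (hF0 : ∀ ω, 0 ≤ F ω)
    (hFint : Integrable (fun ω => F ω ^ (2 / α)) P) :
    ∫ r in Set.Ioi (0 : ℝ),
        (1 - ∫ ω, Real.exp (-θ * F ω * r ^ (-α)) ∂P) * (2 * Real.pi * r)
      = Real.pi * Real.Gamma (1 - 2 / α) * (∫ ω, F ω ^ (2 / α) ∂P) * θ ^ (2 / α) := by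
  have hα0 : (0:ℝ) < α := by linarith
  have hc0 : ∀ ω, 0 ≤ θ * F ω := fun ω => mul_nonneg hθ.le (hF0 ω)
  set g : ℝ → Ω → ℝ := fun r ω => (1 - Real.exp (-(θ * F ω * r ^ (-α)))) * (2 * Real.pi * r)
    with hg
  -- each ω-slice is integrable
  have hslice : ∀ ω, IntegrableOn (fun r => g r ω) (Ioi 0) := by
    intro ω
    have h := (hA_int hα (hc0 ω)).const_mul Real.pi
    apply (integrableOn_congr_fun ?_ measurableSet_Ioi).mp h
    intro r _
    simp only [hg]
    ring
  have hslicenonneg : ∀ ω, ∀ r ∈ Ioi (0:ℝ), 0 ≤ g r ω := by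
    intro ω r hr
    have h1 : 0 ≤ θ * F ω * r ^ (-α) := mul_nonneg (hc0 ω) (Real.rpow_nonneg (le_of_lt hr) _)
    have h2 := one_sub_exp_neg_nonneg h1
    have : (0:ℝ) < r := hr
    positivity
  have hsliceval : ∀ ω, ∫ r in Ioi (0:ℝ), g r ω
      = Real.pi * (Real.Gamma (1 - 2/α) * (θ * F ω) ^ (2/α)) := by
    intro ω
    have h : ∀ r ∈ Ioi (0:ℝ), g r ω
        = Real.pi * ((1 - Real.exp (-((θ * F ω) * r ^ (-α)))) * (2 * r)) := by
      intro r _; simp only [hg]; ring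
    rw [setIntegral_congr_fun measurableSet_Ioi h, integral_const_mul, core hα (hc0 ω)]
  -- measurability on the product
  have hpm : AEStronglyMeasurable (fun p : ℝ × Ω => g p.1 p.2)
      ((volume.restrict (Ioi 0)).prod P) := by
    apply Measurable.aestronglyMeasurable
    fun_prop
  -- integrability on the product
  have hprod : Integrable (fun p : ℝ × Ω => g p.1 p.2) ((volume.restrict (Ioi 0)).prod P) := by
    rw [integrable_prod_iff' hpm]
    refine ⟨Eventually.of_forall fun ω => hslice ω, ?_⟩
    have hnormval : ∀ ω, ∫ r in Ioi (0:ℝ), ‖g r ω‖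
        = Real.pi * Real.Gamma (1 - 2/α) * θ ^ (2/α) * F ω ^ (2/α) := by
      intro ω
      have h : ∀ r ∈ Ioi (0:ℝ), ‖g r ω‖ = g r ω := fun r hr =>
        norm_of_nonneg (hslicenonneg ω r hr)
      rw [setIntegral_congr_fun measurableSet_Ioi h, hsliceval ω,
        Real.mul_rpow hθ.le (hF0 ω)]
      ring
    exact ((hFint.const_mul (Real.pi * Real.Gamma (1 - 2/α) * θ ^ (2/α))).congr
      (ae_of_all _ fun ω => (hnormval ω).symm))
  -- rewrite integrand on Ioi 0
  have h1 : ∀ r ∈ Ioi (0:ℝ),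
      (1 - ∫ ω, Real.exp (-θ * F ω * r ^ (-α)) ∂P) * (2 * Real.pi * r)
        = ∫ ω, g r ω ∂P := by
    intro r hr
    have hr0 : (0:ℝ) < r := hr
    have hint : Integrable (fun ω => Real.exp (-(θ * F ω * r ^ (-α)))) P := by
      apply Integrable.mono' (integrable_const 1) (Measurable.aestronglyMeasurable (by fun_prop))
      refine ae_of_all _ fun ω => ?_
      have h2 : 0 ≤ θ * F ω * r ^ (-α) := mul_nonneg (hc0 ω) (Real.rpow_nonneg hr0.le _)
      rw [Real.norm_eq_abs, abs_of_pos (Real.exp_pos _)]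
      simpa [Real.exp_zero] using Real.exp_le_exp.mpr (neg_nonpos.mpr h2)
    have e1 : ∫ ω, Real.exp (-θ * F ω * r ^ (-α)) ∂P
        = ∫ ω, Real.exp (-(θ * F ω * r ^ (-α))) ∂P := by
      congr 1 with ω; congr 1; ring
    have e2 : ∫ ω, (1 - Real.exp (-(θ * F ω * r ^ (-α)))) ∂P
        = 1 - ∫ ω, Real.exp (-(θ * F ω * r ^ (-α))) ∂P := by
      rw [integral_sub (integrable_const 1) hint, integral_const]
      simp
    rw [e1, ← e2, ← integral_mul_const]
  rw [setIntegral_congr_fun measurableSet_Ioi h1]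
  rw [integral_integral_swap hprod]
  have h3 : ∀ ω, ∫ r in Ioi (0:ℝ), g r ω
      = Real.pi * Real.Gamma (1 - 2/α) * θ ^ (2/α) * F ω ^ (2/α) := by
    intro ω
    rw [hsliceval ω, Real.mul_rpow hθ.le (hF0 ω)]
    ring
  rw [integral_congr_ae (ae_of_all _ h3), integral_const_mul]
  ring
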